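/- Let σ2 > 0, B > 0, β(x) = σ2·(2^{x/B} − 1), and fix κ > 0, C > 0, R > 0, T > 0, g̃ > 0, p_c > 0. The function (t, ℓ) ↦ κ·C³·(R − ℓ)³/T² + (t/g̃)·β(ℓ/t) + p_c·t, with the middle term defined as 0 at (t, ℓ) = (0, 0), is convex on the set {(t, ℓ) : t > 0, 0 ≤ ℓ ≤ R} ∪ {(0, 0)}. -/

import Mathlib

/-- Joint convexity of one user's total energy
`κ·C³·(R − ℓ)³/T² + (t/g̃)·β(ℓ/t) + p_c·t` on
`{(t, ℓ) : t > 0, 0 ≤ ℓ ≤ R} ∪ {(0,0)}`, which makes problem (P1.1) convex. -/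
theorem stmt13 (σ2 B : ℝ) (hσ2 : 0 < σ2) (hB : 0 < B)
    (β : ℝ → ℝ) (hβ : ∀ x, β x = σ2 * ((2 : ℝ) ^ (x / B) - 1))
    (κ C R T gtld pc : ℝ)
    (hκ : 0 < κ) (hC : 0 < C) (hR : 0 < R) (hT : 0 < T)
    (hgtld : 0 < gtld) (hpc : 0 < pc)
    (E : ℝ × ℝ → ℝ)
    (hE : ∀ p : ℝ × ℝ, E p = κ * C ^ 3 * (R - p.2) ^ 3 / T ^ 2
      + (if p.1 = 0 then 0 else p.1 / gtld * β (p.2 / p.1)) + pc * p.1) :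
    ConvexOn ℝ ({p : ℝ × ℝ | 0 < p.1 ∧ 0 ≤ p.2 ∧ p.2 ≤ R} ∪ {(0, 0)}) E := by
  -- convexity of β
  have hβconv : ∀ x y a b : ℝ, 0 ≤ a → 0 ≤ b → a + b = 1 →
      β (a*x + b*y) ≤ a * β x + b * β y := by
    intro x y a b ha hb hab
    have h2 : ∀ z : ℝ, (2:ℝ) ^ (z / B) = Real.exp ((Real.log 2 / B) * z) := by
      intro z
      rw [Real.rpow_def_of_pos (by norm_num : (0:ℝ) < 2)]
      ring_nf
    have hc := convexOn_exp.2 (Set.mem_univ ((Real.log 2 / B) * x))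
      (Set.mem_univ ((Real.log 2 / B) * y)) ha hb hab
    simp only [smul_eq_mul] at hc
    have he : (Real.log 2 / B) * (a*x + b*y)
        = a * ((Real.log 2 / B) * x) + b * ((Real.log 2 / B) * y) := by ring
    rw [hβ, hβ, hβ, h2, h2, h2, he]
    nlinarith [hσ2.le, hc]
  -- convexity of cube on nonnegatives
  have hcube : ∀ u v a b : ℝ, 0 ≤ u → 0 ≤ v → 0 ≤ a → 0 ≤ b → a + b = 1 →
      (a*u + b*v)^3 ≤ a*u^3 + b*v^3 := by
    intro u v a b hu hv ha hb hab
    have key : 0 ≤ a*b*((u-v)^2*((1+a)*u+(1+b)*v)) :=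
      mul_nonneg (mul_nonneg ha hb) (mul_nonneg (sq_nonneg _) (by positivity))
    have id1 : a*u^3 + b*v^3 - (a*u+b*v)^3 = a*b*((u-v)^2*((1+a)*u+(1+b)*v)) := by
      have hb' : b = 1 - a := by linarith
      subst hb'; ring
    linarith
  -- facts about points of the domain
  have hfacts : ∀ r : ℝ × ℝ, r ∈ ({p : ℝ × ℝ | 0 < p.1 ∧ 0 ≤ p.2 ∧ p.2 ≤ R} ∪ {(0, 0)}) →
      0 ≤ r.1 ∧ 0 ≤ r.2 ∧ r.2 ≤ R ∧ (r.1 = 0 → r.2 = 0) := by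
    intro r hr
    rcases hr with ⟨h1, h2, h3⟩ | h0
    · exact ⟨h1.le, h2, h3, fun h => absurd h h1.ne'⟩
    · have : r = (0, 0) := h0
      subst this
      exact ⟨le_refl 0, le_refl 0, hR.le, fun _ => rfl⟩
  -- the perspective-term inequality
  have hpersp : ∀ t1 l1 t2 l2 a b : ℝ, 0 ≤ a → 0 ≤ b → a + b = 1 →
      0 ≤ t1 → 0 ≤ t2 → (t1 = 0 → l1 = 0) → (t2 = 0 → l2 = 0) →
      (if a*t1+b*t2 = 0 then 0 else (a*t1+b*t2)/gtld * β ((a*l1+b*l2)/(a*t1+b*t2)))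
        ≤ a * (if t1 = 0 then 0 else t1/gtld * β (l1/t1))
          + b * (if t2 = 0 then 0 else t2/gtld * β (l2/t2)) := by
    intro t1 l1 t2 l2 a b ha hb hab ht1 ht2 hl1 hl2
    rcases ht1.lt_or_eq with ht1' | ht1'
    · rcases ht2.lt_or_eq with ht2' | ht2'
      · -- both positive
        have ht : 0 < a*t1 + b*t2 := by
          rcases ha.lt_or_eq with ha' | ha'
          · nlinarith [mul_pos ha' ht1', mul_nonneg hb ht2]
          · have hb1 : b = 1 := by linarith
            simp [← ha', hb1, ht2']
        have htne : a*t1 + b*t2 ≠ 0 := ht.ne'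
        rw [if_neg htne, if_neg ht1'.ne', if_neg ht2'.ne']
        have hw1 : (0:ℝ) ≤ a*t1/(a*t1+b*t2) := by positivity
        have hw2 : (0:ℝ) ≤ b*t2/(a*t1+b*t2) := by positivity
        have hsum : a*t1/(a*t1+b*t2) + b*t2/(a*t1+b*t2) = 1 := by
          rw [← add_div, div_self htne]
        have hkey := hβconv (l1/t1) (l2/t2) _ _ hw1 hw2 hsum
        have harg : a*t1/(a*t1+b*t2) * (l1/t1) + b*t2/(a*t1+b*t2) * (l2/t2)
            = (a*l1+b*l2)/(a*t1+b*t2) := by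
          field_simp
        rw [harg] at hkey
        calc (a*t1+b*t2)/gtld * β ((a*l1+b*l2)/(a*t1+b*t2))
            ≤ (a*t1+b*t2)/gtld * (a*t1/(a*t1+b*t2) * β (l1/t1)
                + b*t2/(a*t1+b*t2) * β (l2/t2)) :=
              mul_le_mul_of_nonneg_left hkey (by positivity)
          _ = a * (t1/gtld * β (l1/t1)) + b * (t2/gtld * β (l2/t2)) := by
              field_simp
      · -- t2 = 0
        have hl2' : l2 = 0 := hl2 ht2'.symm
        rw [← ht2', hl2']
        simp only [mul_zero, add_zero]
        simp only [if_true]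
        rcases ha.lt_or_eq with ha' | ha'
        · have htne : a*t1 ≠ 0 := (mul_pos ha' ht1').ne'
          rw [if_neg htne, if_neg ht1'.ne', mul_div_mul_left _ _ ha'.ne']
          have : a*t1/gtld * β (l1/t1) = a * (t1/gtld * β (l1/t1)) := by ring
          rw [this, mul_zero, add_zero]
        · have ha0 : a = 0 := ha'.symm
          simp [ha0]
    · -- t1 = 0
      have hl1' : l1 = 0 := hl1 ht1'.symm
      rw [← ht1', hl1']
      rcases ht2.lt_or_eq with ht2' | ht2'
      · simp only [mul_zero, zero_add]
        simp only [if_true]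
        rcases hb.lt_or_eq with hb' | hb'
        · have htne : b*t2 ≠ 0 := (mul_pos hb' ht2').ne'
          rw [if_neg htne, if_neg ht2'.ne', mul_div_mul_left _ _ hb'.ne']
          have : b*t2/gtld * β (l2/t2) = b * (t2/gtld * β (l2/t2)) := by ring
          rw [this, mul_zero, zero_add]
        · have hb0 : b = 0 := hb'.symm
          simp [hb0]
      · rw [← ht2', hl2 ht2'.symm]
        simp
  constructor
  · -- the set is convex
    intro p hp q hq a b ha hb hab
    obtain ⟨hp1, hp2, hp3, hp4⟩ := hfacts p hp
    obtain ⟨hq1, hq2, hq3, hq4⟩ := hfacts q hq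
    simp only [Set.mem_union, Set.mem_setOf_eq, Set.mem_singleton_iff, Prod.fst_add,
      Prod.snd_add, Prod.smul_fst, Prod.smul_snd, smul_eq_mul, Prod.ext_iff]
    have ht : 0 ≤ a*p.1 + b*q.1 := by positivity
    rcases ht.lt_or_eq with ht' | ht'
    · left
      refine ⟨ht', by positivity, ?_⟩
      nlinarith [mul_le_mul_of_nonneg_left hp3 ha, mul_le_mul_of_nonneg_left hq3 hb]
    · right
      have h1 : a*p.1 = 0 ∧ b*q.1 = 0 := by
        constructor <;> nlinarith [mul_nonneg ha hp1, mul_nonneg hb hq1]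
      have hl1 : a*p.2 = 0 := by
        rcases mul_eq_zero.1 h1.1 with h | h
        · rw [h, zero_mul]
        · rw [hp4 h, mul_zero]
      have hl2 : b*q.2 = 0 := by
        rcases mul_eq_zero.1 h1.2 with h | h
        · rw [h, zero_mul]
        · rw [hq4 h, mul_zero]
      constructor
      · linarith [h1.1, h1.2]
      · linarith [hl1, hl2]
  · -- the convexity inequality
    intro p hp q hq a b ha hb hab
    obtain ⟨hp1, hp2, hp3, hp4⟩ := hfacts p hp
    obtain ⟨hq1, hq2, hq3, hq4⟩ := hfacts q hq
    simp only [hE, Prod.fst_add, Prod.snd_add, Prod.smul_fst, Prod.smul_snd, smul_eq_mul]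
    have h1 : κ*C^3*(R - (a*p.2+b*q.2))^3/T^2
        ≤ a*(κ*C^3*(R-p.2)^3/T^2) + b*(κ*C^3*(R-q.2)^3/T^2) := by
      have hu : 0 ≤ R - p.2 := by linarith
      have hv : 0 ≤ R - q.2 := by linarith
      have hc := hcube (R-p.2) (R-q.2) a b hu hv ha hb hab
      have hRl : R - (a*p.2+b*q.2) = a*(R-p.2)+b*(R-q.2) := by linear_combination (-R)*hab
      rw [hRl]
      have hpos : 0 ≤ κ*C^3/T^2 := by positivity
      calc κ*C^3*(a*(R-p.2)+b*(R-q.2))^3/T^2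
          = (κ*C^3/T^2)*(a*(R-p.2)+b*(R-q.2))^3 := by ring
        _ ≤ (κ*C^3/T^2)*(a*(R-p.2)^3+b*(R-q.2)^3) := mul_le_mul_of_nonneg_left hc hpos
        _ = a*(κ*C^3*(R-p.2)^3/T^2) + b*(κ*C^3*(R-q.2)^3/T^2) := by ring
    have h2 := hpersp p.1 p.2 q.1 q.2 a b ha hb hab hp1 hq1 hp4 hq4
    have h3 : pc*(a*p.1+b*q.1) = a*(pc*p.1)+b*(pc*q.1) := by ring
    linarith [h1, h2, h3]
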